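/- arXiv:2306.00182 — 2 statements merged into one kernel-verified Lean document; each statement's English description precedes it below -/
import Mathlib

section
/- For vectors $s, r \in \mathbb{R}^d$ with all entries positive, the Hilbert projective metric $\mathsf{d}_H(s,r) = \max_{1\le i\le d}\log(s_i/r_i) - \min_{1\le i\le d}\log(s_i/r_i)$ satisfies $\mathsf{d}_H(s,r) \le (r_{i^\star}^{-1} + s_{i_\star}^{-1})\,\|r - s\|_2$, where $i^\star \in \arg\max_{1\le i\le d} s_i/r_i$ and $i_\star \in \arg\min_{1\le i\le d} s_i/r_i$. -/
lemma abs_coord_le_norm {d : ℕ} (x : EuclideanSpace ℝ (Fin d)) (i : Fin d) :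
    |x i| ≤ ‖x‖ := by
  rw [EuclideanSpace.norm_eq]
  rw [show |x i| = Real.sqrt (x i ^ 2) by rw [Real.sqrt_sq_eq_abs]]
  apply Real.sqrt_le_sqrt
  have := Finset.single_le_sum (f := fun j => ‖x j‖ ^ 2) (fun j _ => sq_nonneg _)
    (Finset.mem_univ i)
  simpa using this

/-- Hilbert projective metric bound: for positive vectors `s, r` in `ℝ^d`,
`d_H(s,r) = max_i log(s_i/r_i) - min_i log(s_i/r_i) ≤ (r_{i⋆}⁻¹ + s_{i⋆'}⁻¹) ‖r - s‖₂`,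
where `i⋆` maximizes `s_i/r_i` and `i⋆'` minimizes it. -/
theorem hilbert_metric_euclidean_bound {d : ℕ} (s r : EuclideanSpace ℝ (Fin d))
    (hs : ∀ i, 0 < s i) (hr : ∀ i, 0 < r i)
    (istar istarlow : Fin d)
    (hmax : ∀ i, s i / r i ≤ s istar / r istar)
    (hmin : ∀ i, s istarlow / r istarlow ≤ s i / r i) :
    (⨆ i, Real.log (s i / r i)) - (⨅ i, Real.log (s i / r i))
      ≤ ((r istar)⁻¹ + (s istarlow)⁻¹) * ‖r - s‖ := by
  have hd : Nonempty (Fin d) := ⟨istar⟩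
  have hsup : (⨆ i, Real.log (s i / r i)) = Real.log (s istar / r istar) := by
    apply le_antisymm
    · exact ciSup_le fun i => Real.log_le_log (div_pos (hs i) (hr i)) (hmax i)
    · exact le_ciSup (Set.finite_range fun i => Real.log (s i / r i)).bddAbove istar
  have hinf : (⨅ i, Real.log (s i / r i)) = Real.log (s istarlow / r istarlow) := by
    refine le_antisymm (ciInf_le ?_ istarlow) (le_ciInf ?_)
    · exact (Set.finite_range fun i => Real.log (s i / r i)).bddBelow
    · exact fun i => Real.log_le_log (div_pos (hs istarlow) (hr istarlow)) (hmin i)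
  rw [hsup, hinf]
  have h1 : Real.log (s istar / r istar) ≤ (s istar - r istar) / r istar := by
    calc Real.log (s istar / r istar) ≤ s istar / r istar - 1 :=
          Real.log_le_sub_one_of_pos (div_pos (hs istar) (hr istar))
      _ = (s istar - r istar) / r istar := by rw [sub_div, div_self (hr istar).ne']
  have h2 : -Real.log (s istarlow / r istarlow) ≤ (r istarlow - s istarlow) / s istarlow := by
    rw [← Real.log_inv]
    calc Real.log (s istarlow / r istarlow)⁻¹ ≤ (s istarlow / r istarlow)⁻¹ - 1 :=
          Real.log_le_sub_one_of_pos (inv_pos.mpr (div_pos (hs istarlow) (hr istarlow)))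
      _ = (r istarlow - s istarlow) / s istarlow := by
          rw [inv_div, sub_div, div_self (hs istarlow).ne']
  have hb1 : |s istar - r istar| ≤ ‖r - s‖ := by
    have := abs_coord_le_norm (r - s) istar
    simp only [PiLp.sub_apply] at this
    rwa [abs_sub_comm]
  have hb2 : |r istarlow - s istarlow| ≤ ‖r - s‖ := by
    have := abs_coord_le_norm (r - s) istarlow
    simpa using this
  have key : (s istar - r istar) / r istar + (r istarlow - s istarlow) / s istarlow
      ≤ ((r istar)⁻¹ + (s istarlow)⁻¹) * ‖r - s‖ := by
    rw [add_mul]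
    gcongr
    · rw [div_eq_mul_inv, mul_comm]
      gcongr
      · exact le_of_lt (inv_pos.mpr (hr istar))
      · exact le_trans (le_abs_self _) hb1
    · rw [div_eq_mul_inv, mul_comm]
      gcongr
      · exact le_of_lt (inv_pos.mpr (hs istarlow))
      · exact le_trans (le_abs_self _) hb2
  linarith
end

section
/- Let $\pi$ be a coupling of $\mu_0 \in \mathcal{P}(\mathbb{R}^{d_0})$ and $\mu_1 \in \mathcal{P}(\mathbb{R}^{d_1})$, and for $\ell > 0$ let $\pi_\ell$ be the block approximation of $\pi$ on the grid of hypercubes of side length $\ell$. Then the squared 2-Wasserstein distance satisfies $\mathsf{W}_2^2(\pi, \pi_\ell) \le (d_0 + d_1)\ell^2$; in particular $\pi_\ell$ converges weakly to $\pi$ as $\ell \downarrow 0$. -/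
open MeasureTheory ENNReal

/-- The half-open hypercube of side `ℓ` indexed by `q ∈ ℤ^d`. -/
def gridCube {d : ℕ} (ℓ : ℝ) (q : Fin d → ℤ) : Set (EuclideanSpace ℝ (Fin d)) :=
  {x | ∀ m, (q m : ℝ) * ℓ ≤ x m ∧ x m < ((q m : ℝ) + 1) * ℓ}

/-- The block approximation of a coupling `π` of `(μ0, μ1)` at scale `ℓ`:
`π_ℓ = ∑_{(q,q')} (π(H_q × H_{q'}) / (μ0(H_q) μ1(H_{q'}))) (μ0|_{H_q} ⊗ μ1|_{H_{q'}})`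
(with `0/0 = 0`). -/
noncomputable def blockApprox {d0 d1 : ℕ}
    (μ0 : Measure (EuclideanSpace ℝ (Fin d0))) (μ1 : Measure (EuclideanSpace ℝ (Fin d1)))
    (π : Measure (EuclideanSpace ℝ (Fin d0) × EuclideanSpace ℝ (Fin d1))) (ℓ : ℝ) :
    Measure (EuclideanSpace ℝ (Fin d0) × EuclideanSpace ℝ (Fin d1)) :=
  Measure.sum fun qq : (Fin d0 → ℤ) × (Fin d1 → ℤ) =>
    (π (gridCube ℓ qq.1 ×ˢ gridCube ℓ qq.2) / (μ0 (gridCube ℓ qq.1) * μ1 (gridCube ℓ qq.2)))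
      • ((μ0.restrict (gridCube ℓ qq.1)).prod (μ1.restrict (gridCube ℓ qq.2)))

/-- Squared `2`-Wasserstein distance between measures on the product space, with the
(squared) Euclidean cost `‖x - x'‖² + ‖y - y'‖²`. -/
noncomputable def W2sq {d0 d1 : ℕ}
    (μ ν : Measure (EuclideanSpace ℝ (Fin d0) × EuclideanSpace ℝ (Fin d1))) : ℝ≥0∞ :=
  ⨅ (γ : Measure ((EuclideanSpace ℝ (Fin d0) × EuclideanSpace ℝ (Fin d1))
      × (EuclideanSpace ℝ (Fin d0) × EuclideanSpace ℝ (Fin d1))))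
    (_ : γ.map Prod.fst = μ) (_ : γ.map Prod.snd = ν),
    ∫⁻ p, ENNReal.ofReal (‖p.1.1 - p.2.1‖ ^ 2 + ‖p.1.2 - p.2.2‖ ^ 2) ∂γ

noncomputable def qof {d : ℕ} (ℓ : ℝ) (x : EuclideanSpace ℝ (Fin d)) : Fin d → ℤ :=
  fun m => ⌊x m / ℓ⌋

lemma measurableSet_gridCube {d : ℕ} (ℓ : ℝ) (q : Fin d → ℤ) :
    MeasurableSet (gridCube ℓ q) := by
  have : gridCube ℓ q = ⋂ m, (fun x : EuclideanSpace ℝ (Fin d) => x m) ⁻¹'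
      (Set.Ico ((q m : ℝ) * ℓ) (((q m : ℝ) + 1) * ℓ)) := by
    ext x; simp [gridCube, Set.mem_iInter]
  rw [this]
  exact MeasurableSet.iInter fun m =>
    ((measurable_pi_apply m).comp (WithLp.measurable_ofLp _ _)) measurableSet_Ico

lemma mem_gridCube_iff {d : ℕ} {ℓ : ℝ} (hℓ : 0 < ℓ) (x : EuclideanSpace ℝ (Fin d))
    (q : Fin d → ℤ) : x ∈ gridCube ℓ q ↔ q = qof ℓ x := by
  constructor
  · intro h
    funext m
    have h1 := (h m).1
    have h2 := (h m).2
    have : ⌊x m / ℓ⌋ = q m := by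
      rw [Int.floor_eq_iff]
      constructor
      · rw [le_div_iff₀ hℓ]; exact h1
      · rw [div_lt_iff₀ hℓ]; linarith
    simp [qof, this]
  · rintro rfl
    intro m
    constructor
    · rw [← le_div_iff₀ hℓ]; exact Int.floor_le _
    · rw [← div_lt_iff₀ hℓ]; exact Int.lt_floor_add_one _

lemma mem_gridCube_qof {d : ℕ} {ℓ : ℝ} (hℓ : 0 < ℓ) (x : EuclideanSpace ℝ (Fin d)) :
    x ∈ gridCube ℓ (qof ℓ x) := (mem_gridCube_iff hℓ x _).mpr rfl

lemma norm_sq_le_of_mem_gridCube {d : ℕ} {ℓ : ℝ} {q : Fin d → ℤ}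
    {x y : EuclideanSpace ℝ (Fin d)} (hx : x ∈ gridCube ℓ q) (hy : y ∈ gridCube ℓ q) :
    ‖x - y‖ ^ 2 ≤ d * ℓ ^ 2 := by
  have hsum : ∀ m, ‖(x - y : EuclideanSpace ℝ (Fin d)) m‖ ^ 2 ≤ ℓ ^ 2 := by
    intro m
    have hx1 := (hx m).1; have hx2 := (hx m).2
    have hy1 := (hy m).1; have hy2 := (hy m).2
    have hco : (x - y : EuclideanSpace ℝ (Fin d)) m = x m - y m := rfl
    rw [hco, Real.norm_eq_abs, sq_abs]
    nlinarith
  rw [EuclideanSpace.norm_eq, Real.sq_sqrt (by positivity)]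
  calc (∑ m, ‖(x - y : EuclideanSpace ℝ (Fin d)) m‖ ^ 2) ≤ ∑ _m : Fin d, ℓ ^ 2 :=
        Finset.sum_le_sum fun m _ => hsum m
    _ = d * ℓ ^ 2 := by simp [Finset.sum_const, mul_comm]

section Blocks

variable {d0 d1 : ℕ}

def Bset (ℓ : ℝ) (qq : (Fin d0 → ℤ) × (Fin d1 → ℤ)) :
    Set (EuclideanSpace ℝ (Fin d0) × EuclideanSpace ℝ (Fin d1)) :=
  gridCube ℓ qq.1 ×ˢ gridCube ℓ qq.2

lemma measurableSet_Bset (ℓ : ℝ) (qq : (Fin d0 → ℤ) × (Fin d1 → ℤ)) :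
    MeasurableSet (Bset ℓ qq) :=
  (measurableSet_gridCube ℓ qq.1).prod (measurableSet_gridCube ℓ qq.2)

lemma mem_Bset_iff {ℓ : ℝ} (hℓ : 0 < ℓ)
    (p : EuclideanSpace ℝ (Fin d0) × EuclideanSpace ℝ (Fin d1))
    (qq : (Fin d0 → ℤ) × (Fin d1 → ℤ)) :
    p ∈ Bset ℓ qq ↔ qq = (qof ℓ p.1, qof ℓ p.2) := by
  simp only [Bset, Set.mem_prod, mem_gridCube_iff hℓ, Prod.ext_iff]

lemma Bset_disjoint {ℓ : ℝ} (hℓ : 0 < ℓ) :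
    Pairwise (Function.onFun Disjoint fun qq : (Fin d0 → ℤ) × (Fin d1 → ℤ) => Bset ℓ qq) := by
  intro qq qq' hne
  refine Set.disjoint_left.mpr fun p hp hp' => hne ?_
  rw [mem_Bset_iff hℓ] at hp hp'
  rw [hp, hp']

lemma iUnion_Bset {ℓ : ℝ} (hℓ : 0 < ℓ) :
    ⋃ qq : (Fin d0 → ℤ) × (Fin d1 → ℤ), Bset ℓ qq = Set.univ :=
  Set.eq_univ_of_forall fun p => Set.mem_iUnion.mpr
    ⟨(qof ℓ p.1, qof ℓ p.2), (mem_Bset_iff hℓ p _).mpr rfl⟩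

lemma sum_restrict_Bset {ℓ : ℝ} (hℓ : 0 < ℓ)
    (π : Measure (EuclideanSpace ℝ (Fin d0) × EuclideanSpace ℝ (Fin d1))) :
    Measure.sum (fun qq => π.restrict (Bset ℓ qq)) = π := by
  rw [← Measure.restrict_iUnion (Bset_disjoint hℓ) (measurableSet_Bset ℓ),
    iUnion_Bset hℓ, Measure.restrict_univ]

lemma tsum_Bset {ℓ : ℝ} (hℓ : 0 < ℓ)
    (π : Measure (EuclideanSpace ℝ (Fin d0) × EuclideanSpace ℝ (Fin d1))) :
    ∑' qq : (Fin d0 → ℤ) × (Fin d1 → ℤ), π (Bset ℓ qq) = π Set.univ := by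
  rw [← measure_iUnion (Bset_disjoint hℓ) (measurableSet_Bset ℓ), iUnion_Bset hℓ]

lemma pi_Bset_le_fst {ℓ : ℝ}
    {μ0 : Measure (EuclideanSpace ℝ (Fin d0))}
    {π : Measure (EuclideanSpace ℝ (Fin d0) × EuclideanSpace ℝ (Fin d1))}
    (hπ0 : π.map Prod.fst = μ0) (qq : (Fin d0 → ℤ) × (Fin d1 → ℤ)) :
    π (Bset ℓ qq) ≤ μ0 (gridCube ℓ qq.1) := by
  rw [← hπ0, Measure.map_apply measurable_fst (measurableSet_gridCube ℓ qq.1)]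
  exact measure_mono fun p hp => hp.1

lemma pi_Bset_le_snd {ℓ : ℝ}
    {μ1 : Measure (EuclideanSpace ℝ (Fin d1))}
    {π : Measure (EuclideanSpace ℝ (Fin d0) × EuclideanSpace ℝ (Fin d1))}
    (hπ1 : π.map Prod.snd = μ1) (qq : (Fin d0 → ℤ) × (Fin d1 → ℤ)) :
    π (Bset ℓ qq) ≤ μ1 (gridCube ℓ qq.2) := by
  rw [← hπ1, Measure.map_apply measurable_snd (measurableSet_gridCube ℓ qq.2)]
  exact measure_mono fun p hp => hp.2

end Blocks

section Main

variable {d0 d1 : ℕ}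
  {μ0 : Measure (EuclideanSpace ℝ (Fin d0))} {μ1 : Measure (EuclideanSpace ℝ (Fin d1))}
  {π : Measure (EuclideanSpace ℝ (Fin d0) × EuclideanSpace ℝ (Fin d1))}

theorem part1 [IsProbabilityMeasure μ0] [IsProbabilityMeasure μ1] [IsProbabilityMeasure π]
    (hπ0 : π.map Prod.fst = μ0) (hπ1 : π.map Prod.snd = μ1)
    {ℓ : ℝ} (hℓ : 0 < ℓ) :
    W2sq π (blockApprox μ0 μ1 π ℓ) ≤ ENNReal.ofReal ((d0 + d1) * ℓ ^ 2) := by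
  classical
  set ν : (Fin d0 → ℤ) × (Fin d1 → ℤ) →
      Measure (EuclideanSpace ℝ (Fin d0) × EuclideanSpace ℝ (Fin d1)) := fun qq =>
    (π (Bset ℓ qq) / (μ0 (gridCube ℓ qq.1) * μ1 (gridCube ℓ qq.2)))
      • ((μ0.restrict (gridCube ℓ qq.1)).prod (μ1.restrict (gridCube ℓ qq.2))) with hν
  have hBA : blockApprox μ0 μ1 π ℓ = Measure.sum ν := rfl
  have hπB_ne_top : ∀ qq, π (Bset ℓ qq) ≠ ∞ := fun qq => measure_ne_top π _
  have hm_ne_top : ∀ qq : (Fin d0 → ℤ) × (Fin d1 → ℤ),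
      μ0 (gridCube ℓ qq.1) * μ1 (gridCube ℓ qq.2) ≠ ∞ :=
    fun qq => ENNReal.mul_ne_top (measure_ne_top _ _) (measure_ne_top _ _)
  have hπB_zero_of_m : ∀ qq, μ0 (gridCube ℓ qq.1) * μ1 (gridCube ℓ qq.2) = 0 →
      π (Bset ℓ qq) = 0 := by
    intro qq h
    rcases mul_eq_zero.mp h with h | h
    · exact le_antisymm (h ▸ pi_Bset_le_fst hπ0 qq) zero_le
    · exact le_antisymm (h ▸ pi_Bset_le_snd hπ1 qq) zero_le
  have hν_univ : ∀ qq, ν qq Set.univ = π (Bset ℓ qq) := by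
    intro qq
    rw [hν]
    simp only [Measure.smul_apply, smul_eq_mul]
    rw [← Set.univ_prod_univ, Measure.prod_prod, Measure.restrict_apply_univ,
      Measure.restrict_apply_univ]
    by_cases h : μ0 (gridCube ℓ qq.1) * μ1 (gridCube ℓ qq.2) = 0
    · rw [h, mul_zero]
      exact (hπB_zero_of_m qq h).symm
    · exact ENNReal.div_mul_cancel h (hm_ne_top qq)
  have hν_zero : ∀ qq, π (Bset ℓ qq) = 0 → ν qq = 0 := by
    intro qq h
    have h2 := hν_univ qq
    rw [h] at h2
    exact Measure.measure_univ_eq_zero.mp h2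
  set γ : Measure ((EuclideanSpace ℝ (Fin d0) × EuclideanSpace ℝ (Fin d1))
      × (EuclideanSpace ℝ (Fin d0) × EuclideanSpace ℝ (Fin d1))) :=
    Measure.sum (fun qq => (π (Bset ℓ qq))⁻¹ • ((π.restrict (Bset ℓ qq)).prod (ν qq))) with hγ
  have hmap1 : γ.map Prod.fst = π := by
    rw [hγ, Measure.map_sum measurable_fst.aemeasurable]
    have hqq : ∀ qq, (((π (Bset ℓ qq))⁻¹ • ((π.restrict (Bset ℓ qq)).prod (ν qq))).map Prod.fst)
        = π.restrict (Bset ℓ qq) := by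
      intro qq
      rw [Measure.map_smul, Measure.map_fst_prod, hν_univ qq]
      by_cases h : π (Bset ℓ qq) = 0
      · rw [h]
        simp [Measure.restrict_eq_zero.mpr h]
      · rw [smul_smul, ENNReal.inv_mul_cancel h (hπB_ne_top qq), one_smul]
    simp_rw [hqq]
    exact sum_restrict_Bset hℓ π
  have hmap2 : γ.map Prod.snd = blockApprox μ0 μ1 π ℓ := by
    rw [hγ, hBA, Measure.map_sum measurable_snd.aemeasurable]
    congr 1
    funext qq
    rw [Measure.map_smul, Measure.map_snd_prod, Measure.restrict_apply_univ]
    by_cases h : π (Bset ℓ qq) = 0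
    · rw [h, hν_zero qq h]
      simp
    · rw [smul_smul, ENNReal.inv_mul_cancel h (hπB_ne_top qq), one_smul]
  have hcost : ∀ᵐ p ∂γ, ENNReal.ofReal (‖p.1.1 - p.2.1‖ ^ 2 + ‖p.1.2 - p.2.2‖ ^ 2)
      ≤ ENNReal.ofReal ((d0 + d1) * ℓ ^ 2) := by
    rw [hγ, Measure.ae_sum_iff]
    intro qq
    refine Measure.ae_smul_measure ?_ _
    have hbad : ((π.restrict (Bset ℓ qq)).prod (ν qq))
        (((Bset ℓ qq)ᶜ ×ˢ Set.univ) ∪ (Set.univ ×ˢ (Bset ℓ qq)ᶜ)) = 0 := by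
      refine measure_union_null ?_ ?_
      · rw [Measure.prod_prod, Measure.restrict_apply (measurableSet_Bset ℓ qq).compl]
        simp
      · rw [Measure.prod_prod]
        have hz : ν qq ((Bset ℓ qq)ᶜ) = 0 := by
          rw [hν]
          simp only [Measure.smul_apply, smul_eq_mul]
          rw [Measure.prod_restrict]
          have : (gridCube ℓ qq.1 ×ˢ gridCube ℓ qq.2) = Bset ℓ qq := rfl
          rw [this, Measure.restrict_apply (measurableSet_Bset ℓ qq).compl]
          simp
        rw [hz, mul_zero]
    have h1 : ∀ᵐ p ∂((π.restrict (Bset ℓ qq)).prod (ν qq)),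
        p.1 ∈ Bset ℓ qq ∧ p.2 ∈ Bset ℓ qq := by
      rw [ae_iff]
      refine measure_mono_null ?_ hbad
      intro p hp
      simp only [Set.mem_setOf_eq, not_and_or] at hp
      rcases hp with h | h
      · exact Or.inl ⟨h, trivial⟩
      · exact Or.inr ⟨trivial, h⟩
    filter_upwards [h1] with p hp
    obtain ⟨⟨h11, h12⟩, h21, h22⟩ := hp
    refine ENNReal.ofReal_le_ofReal ?_
    have e0 := norm_sq_le_of_mem_gridCube h11 h21
    have e1 := norm_sq_le_of_mem_gridCube h12 h22
    linarith
  have hγ_univ : γ Set.univ ≤ 1 := by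
    rw [hγ, Measure.sum_apply _ MeasurableSet.univ]
    have hle : ∀ qq, ((π (Bset ℓ qq))⁻¹ • ((π.restrict (Bset ℓ qq)).prod (ν qq))) Set.univ
        ≤ π (Bset ℓ qq) := by
      intro qq
      rw [Measure.smul_apply, smul_eq_mul, ← Set.univ_prod_univ, Measure.prod_prod,
        Measure.restrict_apply_univ, hν_univ qq]
      by_cases h : π (Bset ℓ qq) = 0
      · rw [h]; simp
      · rw [← mul_assoc, ENNReal.inv_mul_cancel h (hπB_ne_top qq), one_mul]
    refine le_trans (ENNReal.tsum_le_tsum hle) ?_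
    rw [tsum_Bset hℓ π, measure_univ]
  calc W2sq π (blockApprox μ0 μ1 π ℓ)
      ≤ ∫⁻ p, ENNReal.ofReal (‖p.1.1 - p.2.1‖ ^ 2 + ‖p.1.2 - p.2.2‖ ^ 2) ∂γ := by
        exact iInf_le_of_le γ (iInf_le_of_le hmap1 (iInf_le_of_le hmap2 le_rfl))
    _ ≤ ∫⁻ _, ENNReal.ofReal ((d0 + d1) * ℓ ^ 2) ∂γ := lintegral_mono_ae hcost
    _ = ENNReal.ofReal ((d0 + d1) * ℓ ^ 2) * γ Set.univ := lintegral_const _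
    _ ≤ ENNReal.ofReal ((d0 + d1) * ℓ ^ 2) * 1 := mul_le_mul_right hγ_univ _
    _ = ENNReal.ofReal ((d0 + d1) * ℓ ^ 2) := mul_one _

end Main

section Part2

variable {d0 d1 : ℕ}

open scoped Classical in
/-- Block average of `f` (with fallback value `f x` on degenerate blocks). -/
noncomputable def Favg (μ0 : Measure (EuclideanSpace ℝ (Fin d0)))
    (μ1 : Measure (EuclideanSpace ℝ (Fin d1)))
    (f : EuclideanSpace ℝ (Fin d0) × EuclideanSpace ℝ (Fin d1) → ℝ) (ℓ : ℝ)
    (x : EuclideanSpace ℝ (Fin d0) × EuclideanSpace ℝ (Fin d1)) : ℝ :=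
  if (μ0.prod μ1) (Bset ℓ (qof ℓ x.1, qof ℓ x.2)) = 0 then f x
  else (∫ y in Bset ℓ (qof ℓ x.1, qof ℓ x.2), f y ∂(μ0.prod μ1)) /
    ((μ0.prod μ1) (Bset ℓ (qof ℓ x.1, qof ℓ x.2))).toReal

lemma measurable_qof {d : ℕ} (ℓ : ℝ) : Measurable (qof (d := d) ℓ) := by
  unfold qof
  refine measurable_pi_lambda _ fun m => Measurable.floor ?_
  exact Measurable.div_const ((measurable_pi_apply (X := fun _ : Fin d => ℝ) m).comp (WithLp.measurable_ofLp _ _)) ℓ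

lemma measurable_qq (ℓ : ℝ) :
    Measurable (fun x : EuclideanSpace ℝ (Fin d0) × EuclideanSpace ℝ (Fin d1) =>
      (qof ℓ x.1, qof ℓ x.2)) :=
  ((measurable_qof ℓ).comp measurable_fst).prod ((measurable_qof ℓ).comp measurable_snd)

lemma measurable_Favg {μ0 : Measure (EuclideanSpace ℝ (Fin d0))}
    {μ1 : Measure (EuclideanSpace ℝ (Fin d1))}
    {f : EuclideanSpace ℝ (Fin d0) × EuclideanSpace ℝ (Fin d1) → ℝ}
    (hf : Continuous f) (ℓ : ℝ) : Measurable (Favg μ0 μ1 f ℓ) := by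
  classical
  unfold Favg
  refine Measurable.ite ?_ hf.measurable ?_
  · exact (measurable_qq ℓ) ((Set.to_countable
      {qq : (Fin d0 → ℤ) × (Fin d1 → ℤ) | (μ0.prod μ1) (Bset ℓ qq) = 0}).measurableSet)
  · exact (measurable_of_countable (fun qq : (Fin d0 → ℤ) × (Fin d1 → ℤ) =>
      (∫ y in Bset ℓ qq, f y ∂(μ0.prod μ1)) / ((μ0.prod μ1) (Bset ℓ qq)).toReal)).comp
      (measurable_qq ℓ)

lemma abs_Favg_le {μ0 : Measure (EuclideanSpace ℝ (Fin d0))}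
    {μ1 : Measure (EuclideanSpace ℝ (Fin d1))}
    [IsProbabilityMeasure μ0] [IsProbabilityMeasure μ1]
    {f : EuclideanSpace ℝ (Fin d0) × EuclideanSpace ℝ (Fin d1) → ℝ}
    (hf : Continuous f) {Cb : ℝ} (hCb : ∀ p, |f p| ≤ Cb) (ℓ : ℝ)
    (x : EuclideanSpace ℝ (Fin d0) × EuclideanSpace ℝ (Fin d1)) :
    |Favg μ0 μ1 f ℓ x| ≤ Cb := by
  classical
  unfold Favg
  split_ifs with h
  · exact hCb x
  · set B := Bset ℓ (qof ℓ x.1, qof ℓ x.2)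
    have hfin : (μ0.prod μ1) B < ∞ := measure_lt_top _ _
    have hpos : 0 < ((μ0.prod μ1) B).toReal :=
      ENNReal.toReal_pos h hfin.ne
    have hI : ‖∫ y in B, f y ∂(μ0.prod μ1)‖ ≤ Cb * ((μ0.prod μ1) B).toReal :=
      norm_setIntegral_le_of_norm_le_const hfin
        (fun y _ => (Real.norm_eq_abs _).trans_le (hCb y))
    rw [abs_div, abs_of_pos hpos]
    rw [div_le_iff₀ hpos]
    simpa [Real.norm_eq_abs] using hI

lemma tendsto_Favg {μ0 : Measure (EuclideanSpace ℝ (Fin d0))}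
    {μ1 : Measure (EuclideanSpace ℝ (Fin d1))}
    [IsProbabilityMeasure μ0] [IsProbabilityMeasure μ1]
    {f : EuclideanSpace ℝ (Fin d0) × EuclideanSpace ℝ (Fin d1) → ℝ}
    (hf : Continuous f)
    (x : EuclideanSpace ℝ (Fin d0) × EuclideanSpace ℝ (Fin d1)) :
    Filter.Tendsto (fun ℓ => Favg μ0 μ1 f ℓ x) (nhdsWithin 0 (Set.Ioi 0))
      (nhds (f x)) := by
  classical
  rw [Metric.tendsto_nhdsWithin_nhds]
  intro ε hε
  obtain ⟨δ', hδ', hδ'f⟩ := Metric.continuousAt_iff.mp (hf.continuousAt (x := x)) (ε / 2)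
    (by positivity)
  set K : ℝ := Real.sqrt (d0 + d1) + 1 with hK
  have hK0 : 0 < K := by positivity
  refine ⟨δ' / K, by positivity, fun ℓ hℓmem hℓd => ?_⟩
  have hℓ : 0 < ℓ := hℓmem
  -- every point of the block of `x` is within `δ'` of `x`
  have hblk : ∀ y ∈ Bset ℓ (qof ℓ x.1, qof ℓ x.2), dist y x < δ' := by
    intro y hy
    have hx : x ∈ Bset ℓ (qof ℓ x.1, qof ℓ x.2) :=
      ⟨mem_gridCube_qof hℓ x.1, mem_gridCube_qof hℓ x.2⟩
    have key : ∀ (d : ℕ) (q : Fin d → ℤ) (u v : EuclideanSpace ℝ (Fin d)),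
        u ∈ gridCube ℓ q → v ∈ gridCube ℓ q → (d : ℝ) ≤ (d0 + d1 : ℝ) →
        dist u v ≤ Real.sqrt (d0 + d1) * ℓ := by
      intro d q u v hu hv hd
      have h1 : ‖u - v‖ ^ 2 ≤ (d0 + d1 : ℝ) * ℓ ^ 2 := by
        have := norm_sq_le_of_mem_gridCube hu hv
        nlinarith [sq_nonneg ℓ]
      have h2 : ‖u - v‖ = Real.sqrt (‖u - v‖ ^ 2) := (Real.sqrt_sq (norm_nonneg _)).symm
      rw [dist_eq_norm, h2]
      calc Real.sqrt (‖u - v‖ ^ 2) ≤ Real.sqrt ((d0 + d1 : ℝ) * ℓ ^ 2) :=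
            Real.sqrt_le_sqrt h1
        _ = Real.sqrt (d0 + d1 : ℝ) * ℓ := by
            rw [Real.sqrt_mul (by positivity), Real.sqrt_sq hℓ.le]
    have hd1 : dist y.1 x.1 ≤ Real.sqrt (d0 + d1) * ℓ :=
      key d0 _ _ _ hy.1 hx.1 (by linarith [Nat.cast_nonneg (α := ℝ) d1])
    have hd2 : dist y.2 x.2 ≤ Real.sqrt (d0 + d1) * ℓ :=
      key d1 _ _ _ hy.2 hx.2 (by linarith [Nat.cast_nonneg (α := ℝ) d0])
    have hKℓ : Real.sqrt (d0 + d1) * ℓ < δ' := by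
      have h1 : K * ℓ < δ' := by
        have : |ℓ - 0| < δ' / K := by simpa using hℓd
        rw [abs_of_pos (by simpa using hℓ)] at this
        calc K * ℓ = ℓ * K := mul_comm _ _
          _ < δ' / K * K := by
            apply mul_lt_mul_of_pos_right _ hK0
            simpa using this
          _ = δ' := div_mul_cancel₀ _ hK0.ne'
      nlinarith [Real.sqrt_nonneg ((d0 : ℝ) + d1)]
    rw [Prod.dist_eq]
    exact lt_of_le_of_lt (max_le hd1 hd2) hKℓ
  unfold Favg
  split_ifs with h
  · simpa using hε
  · set B := Bset ℓ (qof ℓ x.1, qof ℓ x.2) with hB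
    set mB := ((μ0.prod μ1) B).toReal with hmB
    set I := ∫ y in B, f y ∂(μ0.prod μ1) with hI
    have hfin : (μ0.prod μ1) B < ∞ := measure_lt_top _ _
    have hpos : 0 < mB := ENNReal.toReal_pos h hfin.ne
    have hbound : ∀ y ∈ B, ‖f y - f x‖ ≤ ε / 2 := by
      intro y hy
      have := hδ'f (hblk y hy)
      rw [Real.dist_eq] at this
      rw [Real.norm_eq_abs]
      linarith
    have hint : Integrable f ((μ0.prod μ1).restrict B) := by
      refine Integrable.mono' (integrable_const (|f x| + ε / 2))
        hf.aestronglyMeasurable.restrict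
        ((ae_restrict_iff' (measurableSet_Bset ℓ _)).mpr (ae_of_all _ fun y hy => ?_))
      have h1 := hbound y hy
      rw [Real.norm_eq_abs] at h1 ⊢
      calc |f y| = |f x + (f y - f x)| := by ring_nf
        _ ≤ |f x| + |f y - f x| := abs_add_le _ _
        _ ≤ |f x| + ε / 2 := by linarith
    have hsub : ∫ y in B, (f y - f x) ∂(μ0.prod μ1) = I - mB * f x := by
      rw [integral_sub hint (integrable_const _), setIntegral_const, smul_eq_mul]; rfl
    have hIb : ‖∫ y in B, (f y - f x) ∂(μ0.prod μ1)‖ ≤ (ε / 2) * mB :=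
      norm_setIntegral_le_of_norm_le_const hfin hbound
    rw [Real.dist_eq]
    have heq : I / mB - f x = (I - mB * f x) / mB := by field_simp
    rw [heq, abs_div, abs_of_pos hpos, div_lt_iff₀ hpos, ← hsub]
    rw [Real.norm_eq_abs] at hIb
    nlinarith

end Part2

section Identity

variable {d0 d1 : ℕ}
  {μ0 : Measure (EuclideanSpace ℝ (Fin d0))} {μ1 : Measure (EuclideanSpace ℝ (Fin d1))}
  {π : Measure (EuclideanSpace ℝ (Fin d0) × EuclideanSpace ℝ (Fin d1))}

lemma prod_Bset [IsProbabilityMeasure μ1] (ℓ : ℝ) (qq : (Fin d0 → ℤ) × (Fin d1 → ℤ)) :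
    (μ0.prod μ1) (Bset ℓ qq) = μ0 (gridCube ℓ qq.1) * μ1 (gridCube ℓ qq.2) :=
  Measure.prod_prod _ _

lemma integral_blockApprox_eq [IsProbabilityMeasure μ0] [IsProbabilityMeasure μ1]
    [IsProbabilityMeasure π]
    (hπ0 : π.map Prod.fst = μ0) (hπ1 : π.map Prod.snd = μ1)
    {f : EuclideanSpace ℝ (Fin d0) × EuclideanSpace ℝ (Fin d1) → ℝ}
    (hf : Continuous f) {Cb : ℝ} (hCb : ∀ p, |f p| ≤ Cb) {ℓ : ℝ} (hℓ : 0 < ℓ) :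
    ∫ p, f p ∂(blockApprox μ0 μ1 π ℓ) = ∫ x, Favg μ0 μ1 f ℓ x ∂π := by
  classical
  set ν : (Fin d0 → ℤ) × (Fin d1 → ℤ) →
      Measure (EuclideanSpace ℝ (Fin d0) × EuclideanSpace ℝ (Fin d1)) := fun qq =>
    (π (Bset ℓ qq) / (μ0 (gridCube ℓ qq.1) * μ1 (gridCube ℓ qq.2)))
      • ((μ0.restrict (gridCube ℓ qq.1)).prod (μ1.restrict (gridCube ℓ qq.2))) with hν
  have hBA : blockApprox μ0 μ1 π ℓ = Measure.sum ν := rfl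
  have hπB_zero_of_m : ∀ qq, (μ0.prod μ1) (Bset ℓ qq) = 0 → π (Bset ℓ qq) = 0 := by
    intro qq h
    rw [prod_Bset] at h
    rcases mul_eq_zero.mp h with h | h
    · exact le_antisymm (h ▸ pi_Bset_le_fst hπ0 qq) zero_le
    · exact le_antisymm (h ▸ pi_Bset_le_snd hπ1 qq) zero_le
  have hν_univ : ∀ qq, ν qq Set.univ = π (Bset ℓ qq) := by
    intro qq
    rw [hν]
    simp only [Measure.smul_apply, smul_eq_mul]
    rw [← Set.univ_prod_univ, Measure.prod_prod, Measure.restrict_apply_univ,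
      Measure.restrict_apply_univ]
    by_cases h : μ0 (gridCube ℓ qq.1) * μ1 (gridCube ℓ qq.2) = 0
    · rw [h, mul_zero]
      refine (hπB_zero_of_m qq ?_).symm
      rw [prod_Bset]; exact h
    · exact ENNReal.div_mul_cancel h
        (ENNReal.mul_ne_top (measure_ne_top _ _) (measure_ne_top _ _))
  haveI hba_prob : IsProbabilityMeasure (blockApprox μ0 μ1 π ℓ) := by
    constructor
    rw [hBA, Measure.sum_apply _ MeasurableSet.univ]
    simp_rw [hν_univ]
    rw [tsum_Bset hℓ π, measure_univ]
  have hint_f : Integrable f (blockApprox μ0 μ1 π ℓ) := by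
    refine Integrable.mono' (integrable_const Cb) hf.aestronglyMeasurable
      (ae_of_all _ fun p => ?_)
    rw [Real.norm_eq_abs]; exact hCb p
  have hint_Favg : Integrable (Favg μ0 μ1 f ℓ) π := by
    refine Integrable.mono' (integrable_const Cb) (measurable_Favg hf ℓ).aestronglyMeasurable
      (ae_of_all _ fun x => ?_)
    rw [Real.norm_eq_abs]; exact abs_Favg_le hf hCb ℓ x
  have hsum_eq : Measure.sum (fun qq => π.restrict (Bset ℓ qq)) = π := sum_restrict_Bset hℓ π
  have hterm : ∀ qq, ∫ p, f p ∂(ν qq) = ∫ x, Favg μ0 μ1 f ℓ x ∂(π.restrict (Bset ℓ qq)) := by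
    intro qq
    by_cases hm : (μ0.prod μ1) (Bset ℓ qq) = 0
    · have hπB : π (Bset ℓ qq) = 0 := hπB_zero_of_m qq hm
      have hres : π.restrict (Bset ℓ qq) = 0 := Measure.restrict_eq_zero.mpr hπB
      have hν0 : ν qq = 0 := by
        rw [hν]
        simp only
        rw [hπB, ENNReal.zero_div, zero_smul]
      rw [hν0, hres, integral_zero_measure, integral_zero_measure]
    · have hmfin : (μ0.prod μ1) (Bset ℓ qq) ≠ ∞ := measure_ne_top _ _
      set mB := ((μ0.prod μ1) (Bset ℓ qq)).toReal with hmB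
      have hpos : 0 < mB := ENNReal.toReal_pos hm hmfin
      set I := ∫ y in Bset ℓ qq, f y ∂(μ0.prod μ1) with hI
      have hm' : μ0 (gridCube ℓ qq.1) * μ1 (gridCube ℓ qq.2) = (μ0.prod μ1) (Bset ℓ qq) :=
        (prod_Bset ℓ qq).symm
      have hL : ∫ p, f p ∂(ν qq) = ((π (Bset ℓ qq)).toReal / mB) * I := by
        rw [hν]
        simp only
        rw [integral_smul_measure, Measure.prod_restrict, hm', ENNReal.toReal_div, smul_eq_mul]
        rfl
      have hR : ∫ x, Favg μ0 μ1 f ℓ x ∂(π.restrict (Bset ℓ qq))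
          = (π (Bset ℓ qq)).toReal * (I / mB) := by
        have hEq : Set.EqOn (Favg μ0 μ1 f ℓ) (fun _ => I / mB) (Bset ℓ qq) := by
          intro x hx
          have hqq : qq = (qof ℓ x.1, qof ℓ x.2) := (mem_Bset_iff hℓ x qq).mp hx
          simp only [Favg, ← hqq, if_neg hm]; rfl
        calc ∫ x, Favg μ0 μ1 f ℓ x ∂(π.restrict (Bset ℓ qq))
            = ∫ x in Bset ℓ qq, Favg μ0 μ1 f ℓ x ∂π := rfl
          _ = ∫ _x in Bset ℓ qq, (I / mB) ∂π :=
              setIntegral_congr_fun (measurableSet_Bset ℓ qq) hEq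
          _ = (π (Bset ℓ qq)).toReal * (I / mB) := by
              rw [setIntegral_const, smul_eq_mul]; rfl
      rw [hL, hR]
      ring
  calc ∫ p, f p ∂(blockApprox μ0 μ1 π ℓ) = ∑' qq, ∫ p, f p ∂(ν qq) := by
        rw [hBA] at hint_f ⊢
        exact integral_sum_measure hint_f
    _ = ∑' qq, ∫ x, Favg μ0 μ1 f ℓ x ∂(π.restrict (Bset ℓ qq)) := tsum_congr hterm
    _ = ∫ x, Favg μ0 μ1 f ℓ x ∂(Measure.sum fun qq => π.restrict (Bset ℓ qq)) :=
        (integral_sum_measure (by rw [hsum_eq]; exact hint_Favg)).symm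
    _ = ∫ x, Favg μ0 μ1 f ℓ x ∂π := by rw [hsum_eq]

theorem part2 [IsProbabilityMeasure μ0] [IsProbabilityMeasure μ1] [IsProbabilityMeasure π]
    (hπ0 : π.map Prod.fst = μ0) (hπ1 : π.map Prod.snd = μ1)
    (f : EuclideanSpace ℝ (Fin d0) × EuclideanSpace ℝ (Fin d1) → ℝ)
    (hf : Continuous f) (hb : ∃ Cb : ℝ, ∀ p, |f p| ≤ Cb) :
    Filter.Tendsto (fun ℓ : ℝ => ∫ p, f p ∂(blockApprox μ0 μ1 π ℓ))
      (nhdsWithin 0 (Set.Ioi 0)) (nhds (∫ p, f p ∂π)) := by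
  obtain ⟨Cb, hCb⟩ := hb
  have hmain : Filter.Tendsto (fun ℓ : ℝ => ∫ x, Favg μ0 μ1 f ℓ x ∂π)
      (nhdsWithin 0 (Set.Ioi 0)) (nhds (∫ p, f p ∂π)) := by
    refine tendsto_integral_filter_of_dominated_convergence (fun _ => Cb)
      (Filter.Eventually.of_forall fun ℓ => (measurable_Favg hf ℓ).aestronglyMeasurable)
      (Filter.Eventually.of_forall fun ℓ => ae_of_all _ fun x => ?_)
      (integrable_const Cb)
      (ae_of_all _ fun x => tendsto_Favg hf x)
    rw [Real.norm_eq_abs]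
    exact abs_Favg_le hf hCb ℓ x
  refine Filter.Tendsto.congr' ?_ hmain
  filter_upwards [self_mem_nhdsWithin] with ℓ hℓ
  exact (integral_blockApprox_eq hπ0 hπ1 hf hCb hℓ).symm

end Identity


/-- The block approximation satisfies `W₂²(π, π_ℓ) ≤ (d0 + d1) ℓ²`; in particular `π_ℓ`
converges weakly to `π` as `ℓ ↓ 0`. -/
theorem blockApprox_W2_bound {d0 d1 : ℕ}
    (μ0 : Measure (EuclideanSpace ℝ (Fin d0))) (μ1 : Measure (EuclideanSpace ℝ (Fin d1)))
    [IsProbabilityMeasure μ0] [IsProbabilityMeasure μ1]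
    (π : Measure (EuclideanSpace ℝ (Fin d0) × EuclideanSpace ℝ (Fin d1)))
    [IsProbabilityMeasure π]
    (hπ0 : π.map Prod.fst = μ0) (hπ1 : π.map Prod.snd = μ1) :
    (∀ ℓ : ℝ, 0 < ℓ →
        W2sq π (blockApprox μ0 μ1 π ℓ) ≤ ENNReal.ofReal ((d0 + d1) * ℓ ^ 2))
      ∧ ∀ f : EuclideanSpace ℝ (Fin d0) × EuclideanSpace ℝ (Fin d1) → ℝ,
          Continuous f → (∃ Cb : ℝ, ∀ p, |f p| ≤ Cb) →
          Filter.Tendsto (fun ℓ : ℝ => ∫ p, f p ∂(blockApprox μ0 μ1 π ℓ))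
            (nhdsWithin 0 (Set.Ioi 0)) (nhds (∫ p, f p ∂π)) :=
  ⟨fun _ℓ hℓ => part1 hπ0 hπ1 hℓ, fun f hf hb => part2 hπ0 hπ1 f hf hb⟩
end
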